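/- For all v₀, v₁ ≥ 0, the infimum of the energy ∫₀¹ g(v(t))·(v'(t))² dt over all absolutely continuous paths v : [0,1] → [0,∞) with square-integrable derivative such that v(0) = v₀ and v(1) = v₁ equals (ε/16)·( F(4v₁/ε) − F(4v₀/ε) )². Consequently the induced geodesic distance is d(v₀,v₁) = (√ε/4)·| F(4v₁/ε) − F(4v₀/ε) |; the infimum is attained by the path (v_t)_{t∈[0,1]} determined by F(4v_t/ε) = (1−t)·F(4v₀/ε) + t·F(4v₁/ε), and the map t ↦ v_t is convex. -/

import Mathlib

open MeasureTheory Filter Topology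

noncomputable section

/-- The metric tensor `g(v) = 1/(4√(ε²/16 + v²))` of the Sinkhorn-based metric restricted
to centered one-dimensional Gaussians parametrized by their variance. -/
noncomputable def gG (ε v : ℝ) : ℝ := 1 / (4 * Real.sqrt (ε ^ 2 / 16 + v ^ 2))

/-- `F(x) = ∫₀ˣ (1+s²)^(−1/4) ds`, the antiderivative of `x ↦ (1+x²)^(−1/4)`. -/
noncomputable def FG (x : ℝ) : ℝ := ∫ s in (0:ℝ)..x, (1 + s ^ 2) ^ (-(1 / 4) : ℝ)

/-- A path `v : [0,1] → [0,∞)` is admissible (between `v₀` and `v₁`, with derivative `w`)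
when it is absolutely continuous with square-integrable derivative and has the prescribed
endpoints. -/
def AdmPath (v₀ v₁ : ℝ) (v w : ℝ → ℝ) : Prop :=
  v 0 = v₀ ∧ v 1 = v₁ ∧ (∀ t ∈ Set.Icc (0:ℝ) 1, 0 ≤ v t) ∧
  MeasureTheory.IntegrableOn w (Set.Icc 0 1) ∧
  MeasureTheory.IntegrableOn (fun t => (w t) ^ 2) (Set.Icc 0 1) ∧
  ∀ t ∈ Set.Icc (0:ℝ) 1, v t = v₀ + ∫ s in (0:ℝ)..t, w s

/-- The energy `∫₀¹ g(v(t))·(v'(t))² dt` of a path. -/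
noncomputable def energyG (ε : ℝ) (v w : ℝ → ℝ) : ℝ :=
  ∫ t in Set.Icc (0:ℝ) 1, gG ε (v t) * (w t) ^ 2

noncomputable def dFG (x : ℝ) : ℝ := (1 + x ^ 2) ^ (-(1 / 4) : ℝ)

lemma dFG_pos (x : ℝ) : 0 < dFG x := Real.rpow_pos_of_pos (by positivity) _

lemma dFG_cont : Continuous dFG :=
  (continuous_const.add (continuous_pow 2)).rpow_const fun x => Or.inl (by have h : (0:ℝ) < 1 + x^2 := (by positivity); exact h.ne')

lemma FG_hasDeriv (x : ℝ) : HasDerivAt FG (dFG x) x := by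
  have hi : IntervalIntegrable dFG volume 0 x := dFG_cont.intervalIntegrable _ _
  exact intervalIntegral.integral_hasDerivAt_right hi
    (dFG_cont.stronglyMeasurableAtFilter _ _) dFG_cont.continuousAt

lemma FG_diff : Differentiable ℝ FG := fun x => (FG_hasDeriv x).differentiableAt

lemma FG_cont : Continuous FG := FG_diff.continuous

lemma FG_mono : StrictMono FG := by
  apply strictMono_of_deriv_pos
  intro x
  rw [(FG_hasDeriv x).deriv]
  exact dFG_pos x

lemma dFG_even (x : ℝ) : dFG (-x) = dFG x := by simp [dFG]

lemma FG_odd (x : ℝ) : FG (-x) = - FG x := by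
  have h1 : ∫ s in (0:ℝ)..x, dFG (-s) = ∫ s in (-x)..(0:ℝ), dFG s := by
    simpa using intervalIntegral.integral_comp_neg (a := (0:ℝ)) (b := x) dFG
  have h2 : ∫ s in (0:ℝ)..x, dFG (-s) = FG x := by
    simp only [dFG_even]; rfl
  show (∫ s in (0:ℝ)..(-x), dFG s) = - FG x
  rw [intervalIntegral.integral_symm, h1.symm, h2]

lemma dFG_anti {a b : ℝ} (h : 0 ≤ a) (hab : a ≤ b) : dFG b ≤ dFG a := by
  unfold dFG
  rw [Real.rpow_neg (by positivity), Real.rpow_neg (by positivity)]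
  apply inv_anti₀ (Real.rpow_pos_of_pos (by positivity) _)
  exact Real.rpow_le_rpow (by positivity) (by nlinarith) (by norm_num)

lemma FG_lower {x : ℝ} (hx : 1 ≤ x) : x ^ ((1:ℝ)/2) / 2 ≤ FG x := by
  have hx0 : (0:ℝ) < x := by linarith
  have h1 : x * dFG x ≤ FG x := by
    have := intervalIntegral.integral_mono_on (a := (0:ℝ)) (b := x) (μ := volume)
      (f := fun _ => dFG x) (g := dFG) (by linarith)
      intervalIntegrable_const (dFG_cont.intervalIntegrable _ _)
      (fun s hs => dFG_anti hs.1 hs.2)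
    exact (by simpa using this : x * dFG x ≤ ∫ u in (0:ℝ)..x, dFG u)
  have h2 : x ^ ((1:ℝ)/2) / 2 ≤ x * dFG x := by
    set A := (1 + x^2 : ℝ) ^ ((1:ℝ)/4) with hA
    have hpos : (0:ℝ) < A := Real.rpow_pos_of_pos (by positivity) _
    have hd : dFG x = A⁻¹ := by
      rw [hA]; unfold dFG; rw [Real.rpow_neg (by positivity)]
    have hxhalf : (0:ℝ) < x ^ ((1:ℝ)/2) := Real.rpow_pos_of_pos hx0 _
    have hxr : x ^ ((1:ℝ)/2) * x ^ ((1:ℝ)/2) = x := by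
      rw [← Real.rpow_add hx0]; norm_num
    have hsq : A ≤ 2 * x ^ ((1:ℝ)/2) := by
      have e1 : (1 + x^2 : ℝ) ≤ 2 * x^2 := by nlinarith
      have e2 : (1 + x^2 : ℝ) ^ ((1:ℝ)/4) ≤ (2*x^2) ^ ((1:ℝ)/4) :=
        Real.rpow_le_rpow (by positivity) e1 (by norm_num)
      have e3 : ((2:ℝ)*x^2) ^ ((1:ℝ)/4) = 2 ^ ((1:ℝ)/4) * (x^2) ^ ((1:ℝ)/4) :=
        Real.mul_rpow (by norm_num) (by positivity)
      have e4 : ((x:ℝ)^2) ^ ((1:ℝ)/4) = x ^ ((1:ℝ)/2) := by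
        rw [← Real.rpow_natCast x 2, ← Real.rpow_mul hx0.le]
        norm_num
      have e5 : (2:ℝ) ^ ((1:ℝ)/4) ≤ 2 := by
        calc (2:ℝ) ^ ((1:ℝ)/4) ≤ 2 ^ (1:ℝ) :=
              Real.rpow_le_rpow_of_exponent_le (by norm_num) (by norm_num)
        _ = 2 := Real.rpow_one 2
      calc A ≤ 2 ^ ((1:ℝ)/4) * (x^2) ^ ((1:ℝ)/4) := by rw [← e3]; exact e2
      _ ≤ 2 * x ^ ((1:ℝ)/2) := by
            rw [e4]
            have : (0:ℝ) ≤ x ^ ((1:ℝ)/2) := hxhalf.le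
            nlinarith
    have hinv : (2 * x ^ ((1:ℝ)/2))⁻¹ ≤ A⁻¹ := inv_anti₀ hpos hsq
    have heq : x * (2 * x ^ ((1:ℝ)/2))⁻¹ = x ^ ((1:ℝ)/2)/2 := by
      have key : ∀ y : ℝ, 0 < y → y * y = x → x * (2*y)⁻¹ = y/2 := by
        intro y hy hyy
        field_simp
        nlinarith
      exact key _ hxhalf hxr
    calc x ^ ((1:ℝ)/2)/2 = x * (2 * x ^ ((1:ℝ)/2))⁻¹ := heq.symm
    _ ≤ x * A⁻¹ := mul_le_mul_of_nonneg_left hinv hx0.le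
    _ = x * dFG x := by rw [hd]
  linarith

lemma FG_top : Tendsto FG atTop atTop := by
  have h : Tendsto (fun x : ℝ => x ^ ((1:ℝ)/2) / 2) atTop atTop :=
    (tendsto_rpow_atTop (by norm_num)).atTop_div_const (by norm_num)
  exact tendsto_atTop_mono' atTop
    (by filter_upwards [eventually_ge_atTop (1:ℝ)] with x hx using FG_lower hx) h

lemma FG_bot : Tendsto FG atBot atBot := by
  have h : Tendsto (fun x : ℝ => - FG (-x)) atBot atBot :=
    tendsto_neg_atTop_atBot.comp (FG_top.comp tendsto_neg_atBot_atTop)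
  exact h.congr fun x => by rw [FG_odd, neg_neg]

lemma FG_surj : Function.Surjective FG := FG_cont.surjective FG_top FG_bot

noncomputable def FGiso : ℝ ≃o ℝ := StrictMono.orderIsoOfSurjective FG FG_mono FG_surj

noncomputable def Finv : ℝ → ℝ := FGiso.symm

lemma FG_Finv (y : ℝ) : FG (Finv y) = y :=
  StrictMono.orderIsoOfSurjective_self_symm_apply FG FG_mono FG_surj y

lemma Finv_FG (x : ℝ) : Finv (FG x) = x :=
  StrictMono.orderIsoOfSurjective_symm_apply_self FG FG_mono FG_surj x

lemma Finv_mono : Monotone Finv := FGiso.symm.monotone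

lemma Finv_cont : Continuous Finv := FGiso.symm.toHomeomorph.continuous

lemma Finv_hasDeriv (y : ℝ) : HasDerivAt Finv ((1 + (Finv y) ^ 2) ^ ((1:ℝ)/4)) y := by
  have h := HasDerivAt.of_local_left_inverse (f := FG) (g := Finv)
    Finv_cont.continuousAt (FG_hasDeriv (Finv y)) (dFG_pos _).ne'
    (Filter.Eventually.of_forall FG_Finv)
  have : (dFG (Finv y))⁻¹ = (1 + (Finv y) ^ 2) ^ ((1:ℝ)/4) := by
    unfold dFG
    rw [Real.rpow_neg (by positivity), inv_inv]
  rwa [this] at h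

lemma ftc_key (ψ dψ : ℝ → ℝ) (hd : ∀ x, HasDerivAt ψ (dψ x) x)
    (hcont : Continuous dψ) (C : ℝ) (hC : ∀ x, |dψ x| ≤ C)
    (w : ℝ → ℝ) (hw : Integrable w) (v₀ : ℝ) :
    ∫ t in Set.Icc (0:ℝ) 1, dψ (v₀ + ∫ s in (0:ℝ)..t, w s) * w t
      = ψ (v₀ + ∫ s in (0:ℝ)..1, w s) - ψ v₀ := by
  have hC0 : 0 ≤ C := le_trans (abs_nonneg _) (hC 0)
  set v : ℝ → ℝ := fun t => v₀ + ∫ s in (0:ℝ)..t, w s with hv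
  have hvcont : Continuous v :=
    continuous_const.add (intervalIntegral.continuous_primitive (fun a b => hw.intervalIntegrable) 0)
  have hψcont : Continuous ψ := continuous_iff_continuousAt.2 fun x => (hd x).differentiableAt.continuousAt
  -- approximation by continuous functions
  have hex : ∀ n : ℕ, ∃ gn : ℝ → ℝ, Continuous gn ∧ Integrable gn volume ∧
      (∫ x, ‖w x - gn x‖) ≤ 1/(n+1) := by
    intro n
    obtain ⟨gn, _, hint, hgc, hgi⟩ :=
      hw.exists_hasCompactSupport_integral_sub_le (show (0:ℝ) < 1/(n+1) by positivity)
    exact ⟨gn, hgc, hgi, hint⟩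
  choose g hgc hgi hgint using hex
  set vn : ℕ → ℝ → ℝ := fun n t => v₀ + ∫ s in (0:ℝ)..t, g n s with hvn
  have hvncont : ∀ n, Continuous (vn n) := fun n =>
    continuous_const.add (intervalIntegral.continuous_primitive (fun a b => (hgc n).intervalIntegrable a b) 0)
  have hclose : ∀ n, ∀ t ∈ Set.Icc (0:ℝ) 1, |vn n t - v t| ≤ 1/(n+1) := by
    intro n t ht
    have h1 : vn n t - v t = ∫ s in (0:ℝ)..t, (g n s - w s) := by
      rw [intervalIntegral.integral_sub ((hgc n).intervalIntegrable _ _) hw.intervalIntegrable]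
      simp only [hvn, hv]
      ring
    rw [h1]
    have h2 : |∫ s in (0:ℝ)..t, (g n s - w s)| ≤ ∫ s in (0:ℝ)..t, |g n s - w s| :=
      intervalIntegral.abs_integral_le_integral_abs ht.1
    have h3 : (∫ s in (0:ℝ)..t, |g n s - w s|) ≤ ∫ x, ‖w x - g n x‖ := by
      rw [intervalIntegral.integral_of_le ht.1]
      have : ∀ s, |g n s - w s| = ‖w s - g n s‖ := by
        intro s; rw [Real.norm_eq_abs, abs_sub_comm]
      simp only [this]
      exact setIntegral_le_integral (hw.sub (hgi n)).norm
        (Filter.Eventually.of_forall fun s => norm_nonneg _)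
    exact le_trans (le_trans h2 h3) (hgint n)
  -- pointwise convergence on Icc
  have hptw : ∀ t ∈ Set.Icc (0:ℝ) 1, Tendsto (fun n => vn n t) atTop (𝓝 (v t)) := by
    intro t ht
    rw [tendsto_iff_dist_tendsto_zero]
    exact squeeze_zero (fun n => dist_nonneg)
      (fun n => by rw [Real.dist_eq]; exact hclose n t ht)
      tendsto_one_div_add_atTop_nhds_zero_nat
  -- FTC for each n
  have hftc : ∀ n, ∫ t in Set.Icc (0:ℝ) 1, dψ (vn n t) * g n t = ψ (vn n 1) - ψ (vn n 0) := by
    intro n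
    have hdv : ∀ t, HasDerivAt (vn n) (g n t) t := by
      intro t
      exact (intervalIntegral.integral_hasDerivAt_right ((hgc n).intervalIntegrable _ _)
        ((hgc n).stronglyMeasurableAtFilter _ _) (hgc n).continuousAt).const_add v₀
    have hcomp : ∀ t, HasDerivAt (fun u => ψ (vn n u)) (dψ (vn n t) * g n t) t := by
      intro t
      exact (hd (vn n t)).comp t (hdv t)
    have h5 : ∫ t in (0:ℝ)..1, dψ (vn n t) * g n t = ψ (vn n 1) - ψ (vn n 0) :=
      intervalIntegral.integral_eq_sub_of_hasDerivAt (fun t _ => hcomp t)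
        (((hcont.comp (hvncont n)).mul (hgc n)).intervalIntegrable _ _)
    rw [intervalIntegral.integral_of_le zero_le_one] at h5
    rw [integral_Icc_eq_integral_Ioc]
    exact h5
  -- RHS limit
  have hRHS : Tendsto (fun n => ψ (vn n 1) - ψ (vn n 0)) atTop (𝓝 (ψ (v 1) - ψ v₀)) := by
    have h0 : ∀ n, vn n 0 = v₀ := by intro n; simp [hvn]
    have h1 : Tendsto (fun n => ψ (vn n 1)) atTop (𝓝 (ψ (v 1))) :=
      (hψcont.continuousAt.tendsto).comp (hptw 1 (by norm_num))
    simpa [h0] using h1.sub tendsto_const_nhds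
  -- LHS limit
  have hmeasv : AEStronglyMeasurable (fun t => dψ (v t) * w t) (volume.restrict (Set.Icc (0:ℝ) 1)) :=
    ((hcont.comp hvcont).aestronglyMeasurable).mul hw.aestronglyMeasurable.restrict
  have hLHS : Tendsto (fun n => ∫ t in Set.Icc (0:ℝ) 1, dψ (vn n t) * g n t) atTop
      (𝓝 (∫ t in Set.Icc (0:ℝ) 1, dψ (v t) * w t)) := by
    have hsplit : ∀ n, ∫ t in Set.Icc (0:ℝ) 1, dψ (vn n t) * g n t
        = (∫ t in Set.Icc (0:ℝ) 1, dψ (vn n t) * (g n t - w t))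
          + ∫ t in Set.Icc (0:ℝ) 1, dψ (vn n t) * w t := by
      intro n
      rw [← integral_add]
      · congr 1; ext t; ring
      · exact Integrable.bdd_mul (((hgi n).sub hw).restrict)
          ((hcont.comp (hvncont n)).aestronglyMeasurable) (Filter.Eventually.of_forall fun t => show ‖dψ (vn n t)‖ ≤ C by
            rw [Real.norm_eq_abs]; exact hC _)
      · exact Integrable.bdd_mul hw.restrict
          ((hcont.comp (hvncont n)).aestronglyMeasurable) (Filter.Eventually.of_forall fun t => show ‖dψ (vn n t)‖ ≤ C by
            rw [Real.norm_eq_abs]; exact hC _)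
    have hT1 : Tendsto (fun n => ∫ t in Set.Icc (0:ℝ) 1, dψ (vn n t) * (g n t - w t)) atTop (𝓝 0) := by
      refine squeeze_zero_norm (a := fun n : ℕ => C * (1/(n+1))) (fun n => ?_) ?_
      · calc ‖∫ t in Set.Icc (0:ℝ) 1, dψ (vn n t) * (g n t - w t)‖
            ≤ ∫ t in Set.Icc (0:ℝ) 1, ‖dψ (vn n t) * (g n t - w t)‖ :=
              norm_integral_le_integral_norm _
        _ ≤ ∫ t in Set.Icc (0:ℝ) 1, C * ‖w t - g n t‖ := by
              apply integral_mono_of_nonneg (Filter.Eventually.of_forall fun t => norm_nonneg _)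
                (((hw.sub (hgi n)).norm.const_mul C).restrict)
              apply Filter.Eventually.of_forall
              intro t
              calc ‖dψ (vn n t) * (g n t - w t)‖ = ‖dψ (vn n t)‖ * ‖g n t - w t‖ :=
                    norm_mul _ _
              _ ≤ C * ‖g n t - w t‖ :=
                    mul_le_mul_of_nonneg_right (by rw [Real.norm_eq_abs]; exact hC _) (norm_nonneg _)
              _ = C * ‖w t - g n t‖ := by rw [norm_sub_rev]
        _ ≤ C * ∫ t, ‖w t - g n t‖ := by
              rw [← integral_const_mul]
              exact setIntegral_le_integral ((hw.sub (hgi n)).norm.const_mul C)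
                (Filter.Eventually.of_forall fun t => by positivity)
        _ ≤ C * (1/(n+1)) := by
              exact mul_le_mul_of_nonneg_left (hgint n) hC0
      · have : Tendsto (fun n : ℕ => C * (1/(n+1) : ℝ)) atTop (𝓝 (C * 0)) :=
          tendsto_const_nhds.mul tendsto_one_div_add_atTop_nhds_zero_nat
        simpa using this
    have hT2 : Tendsto (fun n => ∫ t in Set.Icc (0:ℝ) 1, dψ (vn n t) * w t) atTop
        (𝓝 (∫ t in Set.Icc (0:ℝ) 1, dψ (v t) * w t)) := by
      apply tendsto_integral_of_dominated_convergence (fun t => C * |w t|)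
      · intro n
        exact ((hcont.comp (hvncont n)).aestronglyMeasurable).mul hw.aestronglyMeasurable.restrict
      · exact (hw.abs.const_mul C).restrict
      · intro n
        apply Filter.Eventually.of_forall
        intro t
        rw [norm_mul, Real.norm_eq_abs, Real.norm_eq_abs]
        exact mul_le_mul_of_nonneg_right (hC _) (abs_nonneg _)
      · rw [ae_restrict_iff' measurableSet_Icc]
        apply Filter.Eventually.of_forall
        intro t ht
        exact ((hcont.continuousAt.tendsto).comp (hptw t ht)).mul_const (w t)
    have := hT1.add hT2
    rw [zero_add] at this
    exact Tendsto.congr (fun n => (hsplit n).symm) this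
  have hfinal := tendsto_nhds_unique (hLHS.congr fun n => hftc n) hRHS
  rw [← hfinal]

section main

variable {ε : ℝ} (hε : 0 < ε)

lemma dψ_hasDeriv (u : ℝ) :
    HasDerivAt (fun u => FG (4 * u / ε)) ((4/ε) * dFG (4 * u / ε)) u := by
  have h0 : (fun y : ℝ => 4 * y / ε) = fun y : ℝ => (4/ε) * y := by funext y; ring
  have h1 : HasDerivAt (fun y : ℝ => 4 * y / ε) (4/ε) u := by
    rw [h0]; simpa using (hasDerivAt_id u).const_mul (4/ε)
  have h2 := (FG_hasDeriv (4 * u / ε)).comp u h1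
  rw [mul_comm (4/ε)]; exact h2

lemma dψ_bound (hε : 0 < ε) (u : ℝ) : |(4/ε) * dFG (4 * u / ε)| ≤ 4/ε := by
  have h1 : dFG (4 * u / ε) ≤ 1 :=
    Real.rpow_le_one_of_one_le_of_nonpos (by nlinarith [sq_nonneg (4*u/ε)]) (by norm_num)
  have h2 : 0 < dFG (4 * u / ε) := dFG_pos _
  rw [abs_of_pos (by positivity)]
  calc (4/ε) * dFG (4 * u / ε) ≤ (4/ε) * 1 := by
        apply mul_le_mul_of_nonneg_left h1 (by positivity)
  _ = 4/ε := by ring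

lemma sqrt16 : Real.sqrt 16 = 4 := by
  rw [show (16:ℝ) = 4^2 by norm_num, Real.sqrt_sq (by norm_num)]

lemma gG_eq (hε : 0 < ε) (u : ℝ) :
    gG ε u = (ε/16) * ((4/ε) * dFG (4 * u / ε))^2 := by
  have hεne : ε ≠ 0 := hε.ne'
  have hDpos : (0:ℝ) < Real.sqrt (ε^2 + 16*u^2) := Real.sqrt_pos.2 (by positivity)
  have hx2 : (1 + (4*u/ε)^2) = (ε^2 + 16*u^2)/ε^2 := by field_simp; ring
  have hsq : dFG (4*u/ε) ^ 2 = ε / Real.sqrt (ε^2+16*u^2) := by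
    have h1 : dFG (4*u/ε) ^ 2 = (1 + (4*u/ε)^2) ^ (-(1/2) : ℝ) := by
      unfold dFG
      rw [← Real.rpow_natCast ((1 + (4*u/ε)^2) ^ (-(1/4) : ℝ)) 2,
        ← Real.rpow_mul (by positivity)]
      norm_num
    rw [h1, hx2, Real.rpow_neg (by positivity), ← Real.sqrt_eq_rpow,
      Real.sqrt_div (by positivity), Real.sqrt_sq hε.le, inv_div]
  have hE : Real.sqrt (ε^2/16 + u^2) = Real.sqrt (ε^2+16*u^2) / 4 := by
    rw [show ε^2/16 + u^2 = (ε^2+16*u^2)/16 by ring, Real.sqrt_div (by positivity), sqrt16]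
  rw [gG, hE, mul_pow, hsq]
  field_simp
  ring
end main

lemma lower_bound {ε : ℝ} (hε : 0 < ε) (v₀ v₁ : ℝ) (v w : ℝ → ℝ)
    (hadm : AdmPath v₀ v₁ v w) :
    (ε/16) * (FG (4 * v₁ / ε) - FG (4 * v₀ / ε))^2 ≤ energyG ε v w := by
  obtain ⟨hv0, hv1, hvnn, hw1, hw2, hvw⟩ := hadm
  set a := FG (4 * v₀ / ε) with ha
  set b := FG (4 * v₁ / ε) with hb
  set dψ : ℝ → ℝ := fun u => (4/ε) * dFG (4 * u / ε) with hdψdef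
  set W : ℝ → ℝ := (Set.Icc (0:ℝ) 1).indicator w with hWdef
  have hWint : Integrable W := (integrable_indicator_iff measurableSet_Icc).2 hw1
  have hWW : ∀ t ∈ Set.Icc (0:ℝ) 1, (∫ s in (0:ℝ)..t, W s) = ∫ s in (0:ℝ)..t, w s := by
    intro t ht
    apply intervalIntegral.integral_congr
    intro s hs
    rw [Set.uIcc_of_le ht.1] at hs
    simp only [hWdef]
    exact Set.indicator_of_mem (Set.mem_Icc.mpr ⟨hs.1, le_trans hs.2 ht.2⟩) w
  have hsub : ∀ t ∈ Set.Icc (0:ℝ) 1, v₀ + (∫ s in (0:ℝ)..t, W s) = v t := by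
    intro t ht
    rw [hWW t ht, ← hvw t ht]
  have hkey := ftc_key (fun u => FG (4 * u / ε)) dψ (fun u => dψ_hasDeriv u)
    (continuous_const.mul (dFG_cont.comp (by fun_prop))) (4/ε) (dψ_bound hε) W hWint v₀
  have hIeq : ∫ t in Set.Icc (0:ℝ) 1, dψ (v t) * w t = b - a := by
    have h1 : ∫ t in Set.Icc (0:ℝ) 1, dψ (v t) * w t
        = ∫ t in Set.Icc (0:ℝ) 1, dψ (v₀ + ∫ s in (0:ℝ)..t, W s) * W t := by
      apply setIntegral_congr_fun measurableSet_Icc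
      intro t ht
      simp only
      rw [hsub t ht, hWdef, Set.indicator_of_mem ht]
    rw [h1, hkey, hsub 1 (by norm_num), hv1, ← hv0]
    have h0 : v 0 = v₀ + ∫ s in (0:ℝ)..0, w s := hvw 0 (by norm_num)
    rw [show v 0 = v₀ by simpa using h0]
  -- measurability of dψ ∘ v on the restricted measure
  set μ := volume.restrict (Set.Icc (0:ℝ) 1) with hμ
  have hp : Continuous (fun t => v₀ + ∫ s in (0:ℝ)..t, W s) :=
    continuous_const.add (intervalIntegral.continuous_primitive (fun a b => hWint.intervalIntegrable) 0)
  have hdψc : Continuous dψ := continuous_const.mul (dFG_cont.comp (by fun_prop))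
  have hvae : (fun t => dψ (v t)) =ᵐ[μ] (fun t => dψ (v₀ + ∫ s in (0:ℝ)..t, W s)) := by
    rw [Filter.EventuallyEq, ae_restrict_iff' measurableSet_Icc]
    exact Filter.Eventually.of_forall fun t ht => by rw [hsub t ht]
  have hmeas : AEStronglyMeasurable (fun t => dψ (v t)) μ :=
    ((hdψc.comp hp).aestronglyMeasurable).congr hvae.symm
  set f : ℝ → ℝ := fun t => dψ (v t) * w t with hfdef
  have hfint : Integrable f μ :=
    Integrable.bdd_mul hw1 hmeas (Filter.Eventually.of_forall fun t => show ‖dψ (v t)‖ ≤ 4/ε by rw [Real.norm_eq_abs]; exact dψ_bound hε _)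
  have hf2int : Integrable (fun t => (f t)^2) μ := by
    have heq : (fun t => (f t)^2) = fun t => (dψ (v t) * dψ (v t)) * (w t)^2 := by
      funext t; simp only [hfdef]; ring
    rw [heq]
    exact Integrable.bdd_mul hw2 (hmeas.mul hmeas) (Filter.Eventually.of_forall fun t => show ‖dψ (v t) * dψ (v t)‖ ≤ (4/ε)^2 by
      rw [Real.norm_eq_abs, abs_mul]
      calc |dψ (v t)| * |dψ (v t)| ≤ (4/ε) * (4/ε) := by
            have := dψ_bound hε (v t)
            nlinarith [abs_nonneg (dψ (v t))]
      _ = (4/ε)^2 := by ring)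
  have hμuniv : (μ Set.univ).toReal = 1 := by
    simp [hμ, Real.volume_Icc]
  have hCS : (b - a)^2 ≤ ∫ t, (f t)^2 ∂μ := by
    have h0 : 0 ≤ ∫ t, (f t - (b-a))^2 ∂μ := integral_nonneg fun t => sq_nonneg _
    have hexp : ∫ t, (f t - (b-a))^2 ∂μ
        = (∫ t, (f t)^2 ∂μ) - (2*(b-a))*(∫ t, f t ∂μ) + (b-a)^2 := by
      have e1 : (fun t => (f t - (b-a))^2)
          = fun t => ((f t)^2 - (2*(b-a))*(f t) + (b-a)^2) := by
        funext t; ring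
      rw [e1, integral_add (by exact (hf2int.sub (hfint.const_mul _))) (integrable_const _),
        integral_sub hf2int (hfint.const_mul _), integral_const_mul, integral_const, show μ.real Set.univ = 1 from hμuniv]
      simp
    rw [hexp, hIeq] at h0
    nlinarith [h0]
  have hEn : energyG ε v w = (ε/16) * ∫ t, (f t)^2 ∂μ := by
    rw [energyG, ← integral_const_mul]
    apply setIntegral_congr_fun measurableSet_Icc
    intro t ht
    simp only [hfdef]
    rw [gG_eq hε (v t)]
    ring
  rw [hEn]
  exact mul_le_mul_of_nonneg_left hCS (by positivity)

lemma optimal_path {ε : ℝ} (hε : 0 < ε) (v₀ v₁ : ℝ) (h₀ : 0 ≤ v₀) (h₁ : 0 ≤ v₁) :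
    ∃ v w, AdmPath v₀ v₁ v w ∧
      energyG ε v w = (ε / 16) * (FG (4 * v₁ / ε) - FG (4 * v₀ / ε)) ^ 2 ∧
      (∀ t ∈ Set.Icc (0:ℝ) 1,
        FG (4 * v t / ε) = (1 - t) * FG (4 * v₀ / ε) + t * FG (4 * v₁ / ε)) ∧
      ConvexOn ℝ (Set.Icc 0 1) v := by
  have hεne : ε ≠ 0 := hε.ne'
  set a := FG (4 * v₀ / ε) with ha
  set b := FG (4 * v₁ / ε) with hb
  set ℓ : ℝ → ℝ := fun t => (1-t)*a + t*b with hℓdef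
  set X : ℝ → ℝ := fun t => Finv (ℓ t) with hXdef
  set v : ℝ → ℝ := fun t => (ε/4) * X t with hvdef
  set w : ℝ → ℝ := fun t => ((ε/4) * (b-a)) * (1 + (X t)^2) ^ ((1:ℝ)/4) with hwdef
  have hℓcont : Continuous ℓ := by fun_prop
  have hXcont : Continuous X := Finv_cont.comp hℓcont
  have hlder : ∀ t : ℝ, HasDerivAt ℓ (b-a) t := by
    intro t
    have h0 : ℓ = fun t : ℝ => (b-a)*t + a := by funext s; simp only [hℓdef]; ring
    rw [h0]
    simpa using ((hasDerivAt_id t).const_mul (b-a)).add_const a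
  have hXder : ∀ t, HasDerivAt X ((1 + (X t)^2) ^ ((1:ℝ)/4) * (b-a)) t :=
    fun t => (Finv_hasDeriv (ℓ t)).comp t (hlder t)
  have hvder : ∀ t, HasDerivAt v (w t) t := by
    intro t
    have h := (hXder t).const_mul (ε/4)
    have : (ε/4) * ((1 + (X t)^2) ^ ((1:ℝ)/4) * (b-a)) = w t := by
      simp only [hwdef]; ring
    rw [this] at h
    exact h
  have hFinva : Finv a = 4 * v₀ / ε := by rw [ha]; exact Finv_FG _
  have hFinvb : Finv b = 4 * v₁ / ε := by rw [hb]; exact Finv_FG _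
  have hv0 : v 0 = v₀ := by
    simp only [hvdef, hXdef, hℓdef]
    norm_num
    rw [hFinva]
    field_simp
  have hv1 : v 1 = v₁ := by
    simp only [hvdef, hXdef, hℓdef]
    norm_num
    rw [hFinvb]
    field_simp
  have hXnn : ∀ t ∈ Set.Icc (0:ℝ) 1, 0 ≤ X t := by
    intro t ht
    rcases le_total a b with hab | hab
    · have h1 : a ≤ ℓ t := by
        simp only [hℓdef]; nlinarith [ht.1, ht.2]
      have := Finv_mono h1
      rw [hFinva] at this
      have : (0:ℝ) ≤ 4 * v₀ / ε := by positivity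
      linarith [Finv_mono h1, hFinva ▸ (by positivity : (0:ℝ) ≤ 4 * v₀ / ε)]
    · have h1 : b ≤ ℓ t := by
        simp only [hℓdef]; nlinarith [ht.1, ht.2]
      have h2 := Finv_mono h1
      rw [hFinvb] at h2
      have h3 : (0:ℝ) ≤ 4 * v₁ / ε := by positivity
      exact le_trans h3 h2
  have hvnn : ∀ t ∈ Set.Icc (0:ℝ) 1, 0 ≤ v t := by
    intro t ht
    simp only [hvdef]
    have := hXnn t ht
    positivity
  have hwcont : Continuous w := by
    apply continuous_const.mul
    exact (continuous_const.add (hXcont.pow 2)).rpow_const fun x => Or.inl (by have h : (0:ℝ) < 1 + (X x)^2 := (by positivity); exact h.ne')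
  have hw1 : IntegrableOn w (Set.Icc 0 1) := hwcont.integrableOn_Icc
  have hw2 : IntegrableOn (fun t => (w t)^2) (Set.Icc 0 1) := (hwcont.pow 2).integrableOn_Icc
  have hvw : ∀ t ∈ Set.Icc (0:ℝ) 1, v t = v₀ + ∫ s in (0:ℝ)..t, w s := by
    intro t _
    have h := intervalIntegral.integral_eq_sub_of_hasDerivAt (f := v) (f' := w)
      (a := 0) (b := t) (fun s _ => hvder s) (hwcont.intervalIntegrable 0 t)
    rw [hv0] at h
    linarith [h]
  have hFGvt : ∀ t : ℝ, FG (4 * v t / ε) = ℓ t := by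
    intro t
    have hxe : 4 * v t / ε = X t := by
      simp only [hvdef]; field_simp
    rw [hxe, hXdef]
    exact FG_Finv (ℓ t)
  have hdr : ∀ t : ℝ, dFG (X t) * (1 + (X t)^2) ^ ((1:ℝ)/4) = 1 := by
    intro t
    unfold dFG
    rw [← Real.rpow_add (by positivity)]
    norm_num
  have hconst : ∀ t : ℝ, gG ε (v t) * (w t)^2 = (ε/16)*(b-a)^2 := by
    intro t
    have hxe : 4 * v t / ε = X t := by
      simp only [hvdef]; field_simp
    have hmain : ((4/ε) * dFG (4 * (v t) / ε)) * w t = b - a := by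
      rw [hxe]
      simp only [hwdef]
      calc (4/ε) * dFG (X t) * ((ε/4)*(b-a) * (1 + (X t)^2) ^ ((1:ℝ)/4))
          = (b-a) * (dFG (X t) * (1 + (X t)^2) ^ ((1:ℝ)/4)) * ((4/ε)*(ε/4)) := by ring
      _ = b - a := by rw [hdr t]; field_simp
    calc gG ε (v t) * (w t)^2
        = (ε/16) * (((4/ε) * dFG (4 * (v t) / ε)) * w t)^2 := by
          rw [gG_eq hε (v t)]; ring
    _ = (ε/16)*(b-a)^2 := by rw [hmain]
  have henergy : energyG ε v w = (ε/16)*(b-a)^2 := by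
    rw [energyG]
    simp only [hconst]
    rw [setIntegral_const]
    simp [Real.volume_Icc]
  have hconv : ConvexOn ℝ (Set.Icc (0:ℝ) 1) v := by
    apply MonotoneOn.convexOn_of_deriv (convex_Icc 0 1)
      (continuous_const.mul hXcont).continuousOn
      (fun t _ => (hvder t).differentiableAt.differentiableWithinAt)
    have hderiv_eq : deriv v = w := funext fun t => (hvder t).deriv
    rw [interior_Icc]; change MonotoneOn (deriv v) (Set.Ioo (0:ℝ) 1); rw [hderiv_eq]
    intro s hs t ht hst
    have hs' : s ∈ Set.Icc (0:ℝ) 1 := ⟨hs.1.le, hs.2.le⟩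
    have ht' : t ∈ Set.Icc (0:ℝ) 1 := ⟨ht.1.le, ht.2.le⟩
    simp only [hwdef]
    rcases le_total a b with hab | hab
    · have hk : 0 ≤ ε/4*(b-a) := mul_nonneg (by positivity) (by linarith)
      have hXm : X s ≤ X t := by
        apply Finv_mono
        simp only [hℓdef]
        nlinarith
      have h0s : 0 ≤ X s := hXnn s hs'
      have hr : (1 + (X s)^2) ^ ((1:ℝ)/4) ≤ (1 + (X t)^2) ^ ((1:ℝ)/4) :=
        Real.rpow_le_rpow (by positivity) (by nlinarith) (by norm_num)
      exact mul_le_mul_of_nonneg_left hr hk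
    · have hk : ε/4*(b-a) ≤ 0 :=
        mul_nonpos_of_nonneg_of_nonpos (by positivity) (by linarith)
      have hXm : X t ≤ X s := by
        apply Finv_mono
        simp only [hℓdef]
        nlinarith
      have h0t : 0 ≤ X t := hXnn t ht'
      have hr : (1 + (X t)^2) ^ ((1:ℝ)/4) ≤ (1 + (X s)^2) ^ ((1:ℝ)/4) :=
        Real.rpow_le_rpow (by positivity) (by nlinarith) (by norm_num)
      exact mul_le_mul_of_nonpos_left hr hk
  exact ⟨v, w, ⟨hv0, hv1, hvnn, hw1, hw2, hvw⟩, henergy,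
    fun t _ => hFGvt t, hconv⟩


/-- **Geodesic distance on one-dimensional Gaussians.** For `v₀, v₁ ≥ 0`, the infimum of
the energy `∫₀¹ g(v)·(v')² dt` over admissible paths from `v₀` to `v₁` equals
`(ε/16)·(F(4v₁/ε) − F(4v₀/ε))²`; hence the induced geodesic distance is
`(√ε/4)·|F(4v₁/ε) − F(4v₀/ε)|`. The infimum is attained by the path determined by
`F(4v_t/ε) = (1−t)F(4v₀/ε) + tF(4v₁/ε)`, and `t ↦ v_t` is convex. -/
theorem stmt13 (ε : ℝ) (hε : 0 < ε) (v₀ v₁ : ℝ) (h₀ : 0 ≤ v₀) (h₁ : 0 ≤ v₁) :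
    sInf {e : ℝ | ∃ v w, AdmPath v₀ v₁ v w ∧ e = energyG ε v w}
      = (ε / 16) * (FG (4 * v₁ / ε) - FG (4 * v₀ / ε)) ^ 2 ∧
    Real.sqrt (sInf {e : ℝ | ∃ v w, AdmPath v₀ v₁ v w ∧ e = energyG ε v w})
      = (Real.sqrt ε / 4) * |FG (4 * v₁ / ε) - FG (4 * v₀ / ε)| ∧
    ∃ v w, AdmPath v₀ v₁ v w ∧
      energyG ε v w = (ε / 16) * (FG (4 * v₁ / ε) - FG (4 * v₀ / ε)) ^ 2 ∧
      (∀ t ∈ Set.Icc (0:ℝ) 1,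
        FG (4 * v t / ε) = (1 - t) * FG (4 * v₀ / ε) + t * FG (4 * v₁ / ε)) ∧
      ConvexOn ℝ (Set.Icc 0 1) v := by
  set S := {e : ℝ | ∃ v w, AdmPath v₀ v₁ v w ∧ e = energyG ε v w} with hS
  set T := (ε / 16) * (FG (4 * v₁ / ε) - FG (4 * v₀ / ε)) ^ 2 with hT
  obtain ⟨v, w, hadm, hen, hFt, hconv⟩ := optimal_path hε v₀ v₁ h₀ h₁
  have hTmem : T ∈ S := ⟨v, w, hadm, hen.symm⟩
  have hlb : ∀ e ∈ S, T ≤ e := by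
    rintro e ⟨v', w', hadm', rfl⟩
    exact lower_bound hε v₀ v₁ v' w' hadm'
  have hinf : sInf S = T :=
    le_antisymm (csInf_le ⟨T, fun e he => hlb e he⟩ hTmem) (le_csInf ⟨T, hTmem⟩ hlb)
  refine ⟨hinf, ?_, v, w, hadm, hen, hFt, hconv⟩
  rw [hinf, hT, Real.sqrt_mul (by positivity), Real.sqrt_sq_eq_abs]
  congr 1
  rw [Real.sqrt_div hε.le, sqrt16]
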